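/- Let R be a ring, A an R-algebra, and R' a faithfully flat R-algebra such that A ⊗_R R' is a finitely generated R'-algebra. Then A is a finitely generated R-algebra. -/

import Mathlib

open TensorProduct

/-- Let `R` be a ring, `A` an `R`-algebra, and `R'` a faithfully
flat `R`-algebra such that `A ⊗_R R'` is a finitely generated `R'`-algebra. Then
`A` is a finitely generated `R`-algebra. -/
theorem stmt13 {R R' A : Type*} [CommRing R] [CommRing R'] [Algebra R R']
    [Module.FaithfullyFlat R R']
    [CommRing A] [Algebra R A]
    (hfg : Algebra.FiniteType R' (R' ⊗[R] A)) :
    Algebra.FiniteType R A := by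
  obtain ⟨s, hs⟩ := hfg.1
  -- for each generator pick a finite tensor representation
  choose rep hrep using fun t : s => TensorProduct.exists_finset (t : R' ⊗[R] A)
  classical
  -- collect the A-components
  set S : Finset A := s.attach.biUnion fun t => (rep t).image Prod.snd with hS
  set B : Subalgebra R A := Algebra.adjoin R (S : Set A) with hB
  have hSB : (S : Set A) ⊆ B := Algebra.subset_adjoin
  -- the algebra map R' ⊗ B → R' ⊗ A
  let φ : R' ⊗[R] B →ₐ[R'] R' ⊗[R] A :=
    Algebra.TensorProduct.map (AlgHom.id R' R') B.val
  have hφ : Function.Surjective φ := by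
    rw [← AlgHom.range_eq_top]
    rw [← top_le_iff, ← hs, Algebra.adjoin_le_iff]
    intro t ht
    rw [show t = _ from hrep ⟨t, ht⟩]
    apply Subalgebra.sum_mem
    intro p hp
    have hpB : p.2 ∈ B := by
      apply hSB
      simp only [hS, Finset.coe_biUnion, Finset.mem_coe, Finset.mem_attach, Set.iUnion_true,
        Set.mem_iUnion, Finset.mem_image]
      exact ⟨⟨t, ht⟩, p, hp, rfl⟩
    exact ⟨p.1 ⊗ₜ[R] (⟨p.2, hpB⟩ : B), rfl⟩
  -- hence lTensor of the submodule inclusion is surjective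
  set p : Submodule R A := Subalgebra.toSubmodule B
  have hsub : Function.Surjective (LinearMap.lTensor R' p.subtype) := by
    have heq : (LinearMap.lTensor R' p.subtype) = (φ.toLinearMap).restrictScalars R := by
      ext r a
      rfl
    rw [heq]
    exact hφ
  -- the quotient vanishes after base change
  have hzero : LinearMap.lTensor R' p.mkQ = 0 := by
    have : LinearMap.lTensor R' p.mkQ ∘ₗ LinearMap.lTensor R' p.subtype = 0 := by
      rw [← LinearMap.lTensor_comp]
      have : p.mkQ ∘ₗ p.subtype = 0 := by
        ext x; simp
      rw [this, LinearMap.lTensor_zero]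
    ext r a
    obtain ⟨y, hy⟩ := hsub (r ⊗ₜ[R] a)
    have := congrFun (congrArg DFunLike.coe this) y
    simpa [hy] using this
  have hsurj : Function.Surjective (LinearMap.lTensor R' p.mkQ) :=
    LinearMap.lTensor_surjective R' (Submodule.mkQ_surjective p)
  have : Subsingleton (R' ⊗[R] (A ⧸ p)) := by
    constructor
    intro x y
    obtain ⟨x', rfl⟩ := hsurj x
    obtain ⟨y', rfl⟩ := hsurj y
    rw [hzero]; rfl
  have : Subsingleton (A ⧸ p) :=
    Module.FaithfullyFlat.lTensor_reflects_triviality R R' (A ⧸ p)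
  have hp : p = ⊤ := (Submodule.Quotient.subsingleton_iff (p := p)).mp this
  have hBtop : B = ⊤ := by
    rw [← Algebra.toSubmodule_eq_top]
    exact hp
  exact ⟨⟨S, by rw [← hB, hBtop]⟩⟩
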